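/- Let Δ ≥ 2 and 1 ≤ j_1 < j_2 ≤ Δ. Let G_Δ be the graph formed by two disjoint copies B'_Δ and B''_Δ of the half graph B_Δ, modified by deleting the edges (u''_i, v''_{j_1}) for all i ∈ {j_1,...,j_2−1} and adding the edges (u''_i, v'_{j_2}) for all i ∈ {j_1,...,j_2−1}. Then G_Δ has no perfect matching. -/
import Mathlib


/-- The graph `G_Δ`: two disjoint copies (indexed by a `Bool`; `false` = the copy `B'_Δ`,
`true` = the copy `B''_Δ`) of the half graph `B_Δ` (on `{u_1,…,u_Δ} ⊔ {v_1,…,v_Δ}` with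
`u_i` adjacent to `v_j` iff `i ≥ j`), modified as follows: for every
`i ∈ {j₁, …, j₂ - 1}`, the edge `(u''_i, v''_{j₁})` is deleted and the edge
`(u''_i, v'_{j₂})` is added. -/
def GDelta (Δ : ℕ) (j₁ j₂ : Fin Δ) : SimpleGraph (Bool × (Fin Δ ⊕ Fin Δ)) :=
  SimpleGraph.fromRel (fun x y =>
    (∃ (b : Bool) (i j : Fin Δ), x = (b, Sum.inl i) ∧ y = (b, Sum.inr j) ∧ j ≤ i ∧
      ¬(b = true ∧ j = j₁ ∧ j₁ ≤ i ∧ i < j₂))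
    ∨ (∃ i : Fin Δ, x = (true, Sum.inl i) ∧ y = (false, Sum.inr j₂) ∧ j₁ ≤ i ∧ i < j₂))

/-- For `Δ ≥ 2` and `j₁ < j₂`, the graph `G_Δ` has no perfect matching. -/
theorem stmt_13 (Δ : ℕ) (hΔ : 2 ≤ Δ) (j₁ j₂ : Fin Δ) (h : j₁ < j₂) :
    ¬ ∃ M : (GDelta Δ j₁ j₂).Subgraph, M.IsPerfectMatching := by
  rintro ⟨M, hm, hs⟩
  -- any neighbor of v''_j is some u''_i with j ≤ i, and moreover j₂ ≤ i when j = j₁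
  have key : ∀ (j : Fin Δ) (x), (GDelta Δ j₁ j₂).Adj (true, Sum.inr j) x →
      ∃ i : Fin Δ, x = (true, Sum.inl i) ∧ j ≤ i ∧ (j = j₁ → j₂ ≤ i) := by
    intro j x hx
    rw [GDelta, SimpleGraph.fromRel_adj] at hx
    obtain ⟨hne, hrel⟩ := hx
    rcases hrel with (⟨b, i, j', h1, h2, h3, h4⟩ | ⟨i, h1, h2, h5, h6⟩) |
      (⟨b, i, j', h1, h2, h3, h4⟩ | ⟨i, h1, h2, h5, h6⟩)
    · simp at h1
    · simp at h1
    · simp only [Prod.mk.injEq, Sum.inr.injEq] at h2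
      obtain ⟨hb, hj⟩ := h2
      subst hb; subst hj
      refine ⟨i, h1, h3, ?_⟩
      intro hj; by_contra hlt
      exact h4 ⟨rfl, hj, hj ▸ h3, lt_of_not_ge hlt⟩
    · simp at h2
  have hpart : ∀ j : Fin Δ, ∃ i : Fin Δ,
      M.Adj (true, Sum.inr j) (true, Sum.inl i) ∧ j ≤ i ∧ (j = j₁ → j₂ ≤ i) := by
    intro j
    obtain ⟨w, hw, -⟩ := hm (hs (true, Sum.inr j))
    obtain ⟨i, rfl, hji, hji2⟩ := key j w (M.adj_sub hw)
    exact ⟨i, hw, hji, hji2⟩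
  choose f hf hle hj₁f using hpart
  have hinj : Function.Injective f := by
    intro a b hab
    have ha := hf a
    rw [hab] at ha
    have := (hm (hs (true, Sum.inl (f b)))).unique ha.symm (hf b).symm
    simpa using this
  set T : Finset (Fin Δ) := Finset.univ.filter (fun j => j₂ ≤ j) with hT
  have hj₁T : j₁ ∉ T := by simp [hT, not_le.mpr h]
  have hmaps : ∀ j ∈ insert j₁ T, f j ∈ T := by
    intro j hj
    rcases Finset.mem_insert.mp hj with rfl | hj
    · simp [hT, hj₁f j rfl]
    · simp only [hT, Finset.mem_filter, Finset.mem_univ, true_and] at hj ⊢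
      exact le_trans hj (hle j)
  have hcard := Finset.card_le_card_of_injOn f hmaps (hinj.injOn)
  rw [Finset.card_insert_of_notMem hj₁T] at hcard
  omega
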